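/- Let k ≥ 3 and t ≥ k³ be integers, and let K_k and K_t be the complete graphs on k and t vertices viewed as relational structures with the single binary relation {(a, b) : a ≠ b}. Then for every nontrivial group G, every minion homomorphism ξ: Pol(K_k, K_t) → Pol(ℤ, G), and every f ∈ Pol(K_k, K_t), the group homomorphism ξ(f) is constant (i.e., trivial). -/

import Mathlib

/-- `f : [k]ⁿ → [t]` is a polymorphism of the pair of complete graphs
`(K_k, K_t)` (with the binary disequality relation): it maps tuples that are
coordinatewise distinct to distinct values. -/
def IsCliquePoly (k t : ℕ) {n : ℕ} (f : (Fin n → Fin k) → Fin t) : Prop :=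
  ∀ x y : Fin n → Fin k, (∀ j, x j ≠ y j) → f x ≠ f y

namespace AGCPaux

set_option linter.unusedSectionVars false

variable {k t : ℕ}

/-- The chain function: escape the regions `{(x,y) : y - x = c}` for `1 ≤ c ≤ m`
to fresh values `J (y-x) y`. -/
def Bgen (b : (Fin 2 → Fin k) → Fin t) (J : Fin k → Fin k → Fin t) (m : ℕ) :
    (Fin 2 → Fin k) → Fin t := fun v =>
  if 1 ≤ (v 1 - v 0).val ∧ (v 1 - v 0).val ≤ m then J (v 1 - v 0) (v 1) else b v

/-- The 4-ary stage function. -/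
def Hgen (bb : (Fin 2 → Fin k) → Fin t) (J : Fin k → Fin k → Fin t) (m : ℕ) :
    (Fin 4 → Fin k) → Fin t := fun v =>
  if (v 2 - v 3).val = m then J (v 2 - v 3) (v 2) else bb ![v 0, v 1]

section lemmas

variable [NeZero k] {b bb : (Fin 2 → Fin k) → Fin t} {J : Fin k → Fin k → Fin t} {m : ℕ}

lemma Bgen_poly (hb : IsCliquePoly k t b)
    (hJ : ∀ c y c' y', J c y = J c' y' → c = c' ∧ y = y')
    (hJb : ∀ v c y, b v ≠ J c y) (m : ℕ) : IsCliquePoly k t (Bgen b J m) := by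
  intro x y hxy
  unfold Bgen
  by_cases h1 : 1 ≤ (x 1 - x 0).val ∧ (x 1 - x 0).val ≤ m
  · by_cases h2 : 1 ≤ (y 1 - y 0).val ∧ (y 1 - y 0).val ≤ m
    · rw [if_pos h1, if_pos h2]
      intro hEq
      exact hxy 1 (hJ _ _ _ _ hEq).2
    · rw [if_pos h1, if_neg h2]
      intro hEq
      exact hJb y _ _ hEq.symm
  · by_cases h2 : 1 ≤ (y 1 - y 0).val ∧ (y 1 - y 0).val ≤ m
    · rw [if_neg h1, if_pos h2]
      exact hJb x _ _
    · rw [if_neg h1, if_neg h2]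
      exact hb x y hxy

lemma Bgen_mix (hJ : ∀ c y c' y', J c y = J c' y' → c = c' ∧ y = y')
    (hJb : ∀ v c y, b v ≠ J c y) {m' : ℕ} (hm : m' < m) :
    ∀ (v : Fin 2 → Fin k) (c y : Fin k), c.val = m → Bgen b J m' v ≠ J c y := by
  intro v c y hc
  unfold Bgen
  by_cases h1 : 1 ≤ (v 1 - v 0).val ∧ (v 1 - v 0).val ≤ m'
  · rw [if_pos h1]
    intro hEq
    have := (hJ _ _ _ _ hEq).1
    rw [this] at h1
    omega
  · rw [if_neg h1]
    exact hJb v c y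

lemma Hgen_poly (hbb : IsCliquePoly k t bb)
    (hJ : ∀ c y c' y', J c y = J c' y' → c = c' ∧ y = y')
    (hmix : ∀ (v : Fin 2 → Fin k) (c y : Fin k), c.val = m → bb v ≠ J c y) :
    IsCliquePoly k t (Hgen bb J m) := by
  intro x y hxy
  unfold Hgen
  by_cases h1 : (x 2 - x 3).val = m
  · by_cases h2 : (y 2 - y 3).val = m
    · rw [if_pos h1, if_pos h2]
      intro hEq
      exact hxy 2 (hJ _ _ _ _ hEq).2
    · rw [if_pos h1, if_neg h2]
      intro hEq
      exact hmix ![y 0, y 1] _ _ h1 hEq.symm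
  · by_cases h2 : (y 2 - y 3).val = m
    · rw [if_neg h1, if_pos h2]
      exact hmix ![x 0, x 1] _ _ h2
    · rw [if_neg h1, if_neg h2]
      refine hbb _ _ ?_
      intro j
      fin_cases j
      · exact hxy 0
      · exact hxy 1

/-- `Bgen` never modifies the diagonal. -/
lemma Bgen_diag (m : ℕ) (x : Fin k) : Bgen b J m ![x, x] = b ![x, x] := by
  unfold Bgen
  rw [if_neg]
  have h : (![x, x] : Fin 2 → Fin k) 1 - ![x, x] 0 = 0 := sub_self x
  rw [h]
  simp

lemma Bgen_zero : Bgen b J 0 = b := by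
  funext v
  unfold Bgen
  rw [if_neg (by omega)]

lemma Bgen_step (hm : 1 ≤ m) (v : Fin 2 → Fin k) (hc : (v 1 - v 0).val ≠ m) :
    Bgen b J m v = Bgen b J (m - 1) v := by
  unfold Bgen
  by_cases h1 : 1 ≤ (v 1 - v 0).val ∧ (v 1 - v 0).val ≤ m - 1
  · rw [if_pos (by omega), if_pos h1]
  · rw [if_neg (by omega), if_neg h1]

end lemmas

end AGCPaux

open AGCPaux in
/-- for `k ≥ 3`, `t ≥ k³`, any nontrivial group `G` and any minion
homomorphism `ξ : Pol(K_k, K_t) → Pol(ℤ, G)`, the image `ξ(f)` of every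
polymorphism is the constant (trivial) homomorphism. -/
theorem no_nontrivial_minion_hom_for_AGCP (k t : ℕ) (hk : 3 ≤ k) (ht : k ^ 3 ≤ t)
    {G : Type*} [Group G] [Nontrivial G]
    (ξ : ∀ n : ℕ, {f : (Fin n → Fin k) → Fin t // IsCliquePoly k t f} →
        ((Fin n → ℤ) → G))
    (hhom : ∀ n f, ∀ x y : Fin n → ℤ, ξ n f (x + y) = ξ n f x * ξ n f y)
    (hminor : ∀ (n n' : ℕ) (π : Fin n → Fin n')
        (f : {f : (Fin n → Fin k) → Fin t // IsCliquePoly k t f})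
        (g : {g : (Fin n' → Fin k) → Fin t // IsCliquePoly k t g}),
        (∀ x, g.1 x = f.1 (fun j => x (π j))) →
        ∀ x, ξ n' g x = ξ n f (fun j => x (π j))) :
    ∀ (n : ℕ) (f : {f : (Fin n → Fin k) → Fin t // IsCliquePoly k t f})
      (x : Fin n → ℤ), ξ n f x = 1 := by
  haveI : NeZero k := ⟨by omega⟩
  -- basic homomorphism facts
  have hone : ∀ n f, ξ n f 0 = 1 := by
    intro n f
    have h := hhom n f 0 0
    rw [add_zero] at h
    have := mul_left_cancel (a := ξ n f 0) (b := (1 : G)) (c := ξ n f 0)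
      (by rw [mul_one]; exact h)
    exact this.symm
  have hz : ∀ n f (v : Fin n → ℤ) (c : ℤ), ξ n f (c • v) = (ξ n f v) ^ c := by
    intro n f v c
    have hneg : ∀ w : Fin n → ℤ, ξ n f (-w) = (ξ n f w)⁻¹ := by
      intro w
      have h := hhom n f w (-w)
      rw [add_neg_cancel, hone] at h
      exact eq_inv_of_mul_eq_one_right h.symm
    induction c using Int.induction_on with
    | zero => rw [zero_smul, hone, zpow_zero]
    | succ i ih =>
        have h : ((i : ℤ) + 1) • v = (i : ℤ) • v + v := by rw [add_smul, one_smul]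
        rw [h, hhom, ih, ← zpow_add_one]
    | pred i ih =>
        have h : (-(i : ℤ) - 1) • v = (-(i : ℤ)) • v + (-v) := by
          rw [sub_smul, one_smul, sub_eq_add_neg]
        rw [h, hhom, ih, hneg, ← zpow_sub_one]
  -- the key binary lemma
  have key : ∀ b : {f : (Fin 2 → Fin k) → Fin t // IsCliquePoly k t f},
      ξ 2 b (Pi.single 0 1) = 1 := by
    intro b
    -- construct the fresh-values injection J
    obtain ⟨E⟩ : Nonempty ((Fin k × Fin k) ↪
        {v : Fin t // v ∈ (Finset.image b.1 Finset.univ)ᶜ}) := by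
      apply Function.Embedding.nonempty_of_card_le
      have h1 : Fintype.card (Fin k × Fin k) = k * k := by simp
      have h2 : Fintype.card {v : Fin t // v ∈ (Finset.image b.1 Finset.univ)ᶜ}
          = ((Finset.image b.1 Finset.univ)ᶜ : Finset (Fin t)).card := Fintype.card_coe _
      have h3 : (Finset.image b.1 Finset.univ).card ≤ k ^ 2 := by
        calc (Finset.image b.1 Finset.univ).card
            ≤ (Finset.univ : Finset (Fin 2 → Fin k)).card := Finset.card_image_le
          _ = k ^ 2 := by simp [Fintype.card_fun]
      have h4 : ((Finset.image b.1 Finset.univ)ᶜ : Finset (Fin t)).card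
          = t - (Finset.image b.1 Finset.univ).card := by
        rw [Finset.card_compl]
        simp
      have h5 : k ^ 3 ≥ k * k + k ^ 2 := by nlinarith
      omega
    set J : Fin k → Fin k → Fin t := fun c y => (E (c, y)).1 with hJdef
    have hJ : ∀ c y c' y', J c y = J c' y' → c = c' ∧ y = y' := by
      intro c y c' y' h
      have := E.injective (Subtype.ext h)
      exact ⟨congrArg Prod.fst this, congrArg Prod.snd this⟩
    have hJb : ∀ (v : Fin 2 → Fin k) c y, b.1 v ≠ J c y := by
      intro v c y hEq
      have hmem : b.1 v ∈ Finset.image b.1 Finset.univ :=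
        Finset.mem_image_of_mem _ (Finset.mem_univ v)
      have hnmem := (E (c, y)).2
      rw [Finset.mem_compl] at hnmem
      rw [hEq] at hmem
      exact hnmem hmem
    -- the twisted function b~
    set bt : (Fin 2 → Fin k) → Fin t := fun v => b.1 (fun _ => v 1) with hbtdef
    have hbtpoly : IsCliquePoly k t bt := by
      intro x y h
      exact b.2 _ _ (fun _ => h 1)
    have hbtJ : ∀ (v : Fin 2 → Fin k) c y, bt v ≠ J c y := fun v c y => hJb _ c y
    -- chain functions and their polymorphism proofs
    have hPpoly : ∀ m, IsCliquePoly k t (Bgen b.1 J m) := fun m => Bgen_poly b.2 hJ hJb m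
    have hPtpoly : ∀ m, IsCliquePoly k t (Bgen bt J m) := fun m => Bgen_poly hbtpoly hJ hbtJ m
    -- both chains share all diagonals
    have hdiag : ∀ (m : ℕ) (z : Fin k), Bgen b.1 J m ![z, z] = Bgen bt J m ![z, z] := by
      intro m z
      rw [Bgen_diag, Bgen_diag]
      show b.1 ![z, z] = b.1 (fun _ => (![z, z] : Fin 2 → Fin k) 1)
      apply congrArg
      funext j
      fin_cases j <;> rfl
    -- the downward induction claim
    set Claim : ℕ → Prop := fun m => ∀ x : Fin 2 → ℤ,
      ξ 2 ⟨Bgen b.1 J m, hPpoly m⟩ x = ξ 2 ⟨Bgen bt J m, hPtpoly m⟩ x with hClaimdef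
    -- base case
    have base : Claim (k - 1) := by
      intro x
      have hfuneq : Bgen b.1 J (k - 1) = Bgen bt J (k - 1) := by
        funext v
        unfold Bgen
        by_cases h1 : 1 ≤ (v 1 - v 0).val ∧ (v 1 - v 0).val ≤ k - 1
        · rw [if_pos h1, if_pos h1]
        · rw [if_neg h1, if_neg h1]
          have hlt : (v 1 - v 0).val < k := (v 1 - v 0).is_lt
          have h0 : (v 1 - v 0).val = 0 := by omega
          have hv10 : v 1 - v 0 = 0 := by
            apply Fin.ext
            simp [h0]
          have hv : v 1 = v 0 := sub_eq_zero.mp hv10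
          show b.1 v = b.1 (fun _ => v 1)
          apply congrArg
          funext j
          fin_cases j
          · exact hv.symm
          · rfl
      have heq : (⟨Bgen b.1 J (k-1), hPpoly (k-1)⟩ :
          {f : (Fin 2 → Fin k) → Fin t // IsCliquePoly k t f}) =
          ⟨Bgen bt J (k-1), hPtpoly (k-1)⟩ := Subtype.ext hfuneq
      rw [heq]
    -- induction step
    have step : ∀ m : ℕ, 1 ≤ m → Claim m → Claim (m - 1) := by
      intro m hm IH
      simp only [hClaimdef] at IH ⊢
      -- stage functions
      have hmixb : ∀ (v : Fin 2 → Fin k) (c y : Fin k), c.val = m →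
          Bgen b.1 J (m-1) v ≠ J c y := Bgen_mix hJ hJb (by omega)
      have hmixbt : ∀ (v : Fin 2 → Fin k) (c y : Fin k), c.val = m →
          Bgen bt J (m-1) v ≠ J c y := Bgen_mix hJ hbtJ (by omega)
      have hHpoly : IsCliquePoly k t (Hgen (Bgen b.1 J (m-1)) J m) :=
        Hgen_poly (hPpoly (m-1)) hJ hmixb
      have hHtpoly : IsCliquePoly k t (Hgen (Bgen bt J (m-1)) J m) :=
        Hgen_poly (hPtpoly (m-1)) hJ hmixbt
      -- generic chain-side facts, for both sides
      have side : ∀ (bs : (Fin 2 → Fin k) → Fin t)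
          (hBm1 : IsCliquePoly k t (Bgen bs J (m-1)))
          (hBm : IsCliquePoly k t (Bgen bs J m))
          (hH : IsCliquePoly k t (Hgen (Bgen bs J (m-1)) J m)),
          (∀ a c d : ℤ, ξ 4 ⟨Hgen (Bgen bs J (m-1)) J m, hH⟩ ![a, c, d, d]
              = ξ 2 ⟨Bgen bs J (m-1), hBm1⟩ ![a, c]) ∧
          (∀ a c : ℤ, ξ 2 ⟨Bgen bs J m, hBm⟩ ![a, c]
              = ξ 4 ⟨Hgen (Bgen bs J (m-1)) J m, hH⟩ ![a, c, c, a]) := by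
        intro bs hBm1 hBm hH
        constructor
        · -- R1 : the padded (m-1)-chain is a common minor
          set g3 : (Fin 3 → Fin k) → Fin t := fun v => Bgen bs J (m-1) ![v 0, v 1] with hg3def
          have hg3poly : IsCliquePoly k t g3 := by
            intro x y h
            apply hBm1
            intro j
            fin_cases j
            · exact h 0
            · exact h 1
          have hg3H : ∀ v : Fin 3 → Fin k,
              g3 v = Hgen (Bgen bs J (m-1)) J m (fun j => v (![0,1,2,2] j)) := by
            intro v
            have hw : (fun j => v ((![0,1,2,2] : Fin 4 → Fin 3) j)) = ![v 0, v 1, v 2, v 2] := by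
              funext j
              fin_cases j <;> rfl
            rw [hw]
            show Bgen bs J (m-1) ![v 0, v 1]
                = Hgen (Bgen bs J (m-1)) J m ![v 0, v 1, v 2, v 2]
            unfold Hgen
            have hc' : ¬(((![v 0, v 1, v 2, v 2] : Fin 4 → Fin k) 2
                - ![v 0, v 1, v 2, v 2] 3).val = m) := by
              show ¬((v 2 - v 2).val = m)
              rw [sub_self]
              simp
              omega
            rw [if_neg hc']
            rfl
          have hg3P : ∀ v : Fin 3 → Fin k,
              g3 v = Bgen bs J (m-1) (fun j => v (![0,1] j)) := by
            intro v
            have hw : (fun j => v ((![0,1] : Fin 2 → Fin 3) j)) = ![v 0, v 1] := by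
              funext j
              fin_cases j <;> rfl
            rw [hw]
          intro a c d
          have e1 := hminor 4 3 ![0,1,2,2] ⟨Hgen (Bgen bs J (m-1)) J m, hH⟩
            ⟨g3, hg3poly⟩ hg3H ![a, c, d]
          have e2 := hminor 2 3 ![0,1] ⟨Bgen bs J (m-1), hBm1⟩
            ⟨g3, hg3poly⟩ hg3P ![a, c, d]
          have hv1 : (fun j => (![a, c, d] : Fin 3 → ℤ) ((![0,1,2,2] : Fin 4 → Fin 3) j))
              = ![a, c, d, d] := by
            funext j
            fin_cases j <;> rfl
          have hv2 : (fun j => (![a, c, d] : Fin 3 → ℤ) ((![0,1] : Fin 2 → Fin 3) j))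
              = ![a, c] := by
            funext j
            fin_cases j <;> rfl
          rw [hv1] at e1
          rw [hv2] at e2
          rw [← e1, ← e2]
        · -- R2 : the m-chain is a minor of the stage function
          have hg2H : ∀ v : Fin 2 → Fin k,
              Bgen bs J m v = Hgen (Bgen bs J (m-1)) J m (fun j => v (![0,1,1,0] j)) := by
            intro v
            have hw : (fun j => v ((![0,1,1,0] : Fin 4 → Fin 2) j)) = ![v 0, v 1, v 1, v 0] := by
              funext j
              fin_cases j <;> rfl
            rw [hw]
            show Bgen bs J m v = Hgen (Bgen bs J (m-1)) J m ![v 0, v 1, v 1, v 0]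
            unfold Hgen
            by_cases hc : (v 1 - v 0).val = m
            · have hc' : ((![v 0, v 1, v 1, v 0] : Fin 4 → Fin k) 2
                  - ![v 0, v 1, v 1, v 0] 3).val = m := hc
              rw [if_pos hc']
              show Bgen bs J m v = J (v 1 - v 0) (v 1)
              unfold Bgen
              rw [if_pos (by omega)]
            · have hc' : ¬(((![v 0, v 1, v 1, v 0] : Fin 4 → Fin k) 2
                  - ![v 0, v 1, v 1, v 0] 3).val = m) := hc
              rw [if_neg hc']
              have hvv : v = ![v 0, v 1] := by
                funext j
                fin_cases j <;> rfl
              exact (Bgen_step hm v hc).trans (congrArg _ hvv)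
          intro a c
          have e := hminor 4 2 ![0,1,1,0] ⟨Hgen (Bgen bs J (m-1)) J m, hH⟩
            ⟨Bgen bs J m, hBm⟩ hg2H ![a, c]
          have hv : (fun j => (![a, c] : Fin 2 → ℤ) ((![0,1,1,0] : Fin 4 → Fin 2) j))
              = ![a, c, c, a] := by
            funext j
            fin_cases j <;> rfl
          rw [hv] at e
          exact e
      obtain ⟨R1, R2⟩ := side b.1 (hPpoly (m-1)) (hPpoly m) hHpoly
      obtain ⟨R1t, R2t⟩ := side bt (hPtpoly (m-1)) (hPtpoly m) hHtpoly
      -- R3 : pinning the helper generators via the common diagonal minor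
      have R3 : ∀ a c d : ℤ,
          ξ 4 ⟨Hgen (Bgen b.1 J (m-1)) J m, hHpoly⟩ ![a, a, c, d]
            = ξ 4 ⟨Hgen (Bgen bt J (m-1)) J m, hHtpoly⟩ ![a, a, c, d] := by
        set g3' : (Fin 3 → Fin k) → Fin t :=
          fun v => Hgen (Bgen b.1 J (m-1)) J m ![v 0, v 0, v 1, v 2] with hg3'def
        have hg3'poly : IsCliquePoly k t g3' := by
          intro x y h
          apply hHpoly
          intro j
          fin_cases j
          · exact h 0
          · exact h 0
          · exact h 1
          · exact h 2
        have hEq1 : ∀ v : Fin 3 → Fin k,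
            g3' v = Hgen (Bgen b.1 J (m-1)) J m (fun j => v (![0,0,1,2] j)) := by
          intro v
          have hw : (fun j => v ((![0,0,1,2] : Fin 4 → Fin 3) j)) = ![v 0, v 0, v 1, v 2] := by
            funext j
            fin_cases j <;> rfl
          rw [hw]
        have hEq2 : ∀ v : Fin 3 → Fin k,
            g3' v = Hgen (Bgen bt J (m-1)) J m (fun j => v (![0,0,1,2] j)) := by
          intro v
          have hw : (fun j => v ((![0,0,1,2] : Fin 4 → Fin 3) j)) = ![v 0, v 0, v 1, v 2] := by
            funext j
            fin_cases j <;> rfl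
          rw [hw]
          show Hgen (Bgen b.1 J (m-1)) J m ![v 0, v 0, v 1, v 2]
              = Hgen (Bgen bt J (m-1)) J m ![v 0, v 0, v 1, v 2]
          unfold Hgen
          by_cases hc : ((![v 0, v 0, v 1, v 2] : Fin 4 → Fin k) 2
              - ![v 0, v 0, v 1, v 2] 3).val = m
          · rw [if_pos hc, if_pos hc]
          · rw [if_neg hc, if_neg hc]
            exact hdiag (m-1) (v 0)
        intro a c d
        have e1 := hminor 4 3 ![0,0,1,2] ⟨Hgen (Bgen b.1 J (m-1)) J m, hHpoly⟩
          ⟨g3', hg3'poly⟩ hEq1 ![a, c, d]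
        have e2 := hminor 4 3 ![0,0,1,2] ⟨Hgen (Bgen bt J (m-1)) J m, hHtpoly⟩
          ⟨g3', hg3'poly⟩ hEq2 ![a, c, d]
        have hv : (fun j => (![a, c, d] : Fin 3 → ℤ) ((![0,0,1,2] : Fin 4 → Fin 3) j))
            = ![a, a, c, d] := by
          funext j
          fin_cases j <;> rfl
        rw [hv] at e1 e2
        exact e1.symm.trans e2
      -- now the group algebra
      set XH := ξ 4 ⟨Hgen (Bgen b.1 J (m-1)) J m, hHpoly⟩ with hXHdef
      set XHt := ξ 4 ⟨Hgen (Bgen bt J (m-1)) J m, hHtpoly⟩ with hXHtdef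
      have hsum1 : (![(1:ℤ),0,0,1] : Fin 4 → ℤ) = ![1,0,0,0] + ![0,0,0,1] := by
        funext j
        fin_cases j <;> simp
      have hsum2 : (![(0:ℤ),1,1,0] : Fin 4 → ℤ) = ![0,1,0,0] + ![0,0,1,0] := by
        funext j
        fin_cases j <;> simp
      have hsum3 : ∀ a c : ℤ, (![a,c,0,0] : Fin 4 → ℤ) = a • ![1,0,0,0] + c • ![0,1,0,0] := by
        intro a c
        funext j
        fin_cases j <;> simp
      have hXHadd : ∀ u w : Fin 4 → ℤ, XH (u + w) = XH u * XH w := fun u w => hhom 4 _ u w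
      have hXHtadd : ∀ u w : Fin 4 → ℤ, XHt (u + w) = XHt u * XHt w := fun u w => hhom 4 _ u w
      have hXHz : ∀ (u : Fin 4 → ℤ) (c : ℤ), XH (c • u) = XH u ^ c := fun u c => hz 4 _ u c
      have hXHtz : ∀ (u : Fin 4 → ℤ) (c : ℤ), XHt (c • u) = XHt u ^ c := fun u c => hz 4 _ u c
      have hD : XH ![0,0,0,1] = XHt ![0,0,0,1] := R3 0 0 1
      have hC : XH ![0,0,1,0] = XHt ![0,0,1,0] := R3 0 1 0
      have hA : XH ![1,0,0,0] = XHt ![1,0,0,0] := by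
        have h1 : XH ![1,0,0,1] = XHt ![1,0,0,1] := by
          rw [← R2 1 0, ← R2t 1 0]
          exact IH ![1, 0]
        rw [hsum1] at h1
        rw [hXHadd, hXHtadd, hD] at h1
        exact mul_right_cancel h1
      have hB : XH ![0,1,0,0] = XHt ![0,1,0,0] := by
        have h1 : XH ![0,1,1,0] = XHt ![0,1,1,0] := by
          rw [← R2 0 1, ← R2t 0 1]
          exact IH ![0, 1]
        rw [hsum2] at h1
        rw [hXHadd, hXHtadd, hC] at h1
        exact mul_right_cancel h1
      -- conclude the claim at m-1
      intro x
      have hx2 : x = ![x 0, x 1] := by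
        funext j
        fin_cases j <;> rfl
      rw [hx2, ← R1 (x 0) (x 1) 0, ← R1t (x 0) (x 1) 0]
      rw [hsum3 (x 0) (x 1), hXHadd, hXHtadd, hXHz, hXHz, hXHtz, hXHtz, hA, hB]
    -- conclude Claim 0 by downward induction
    have claim0 : Claim 0 := by
      have hdesc : ∀ i : ℕ, i ≤ k - 1 → Claim (k - 1 - i) := by
        intro i
        induction i with
        | zero =>
            intro _
            rw [Nat.sub_zero]
            exact base
        | succ j ihj =>
            intro hj
            have h1 : Claim (k - 1 - j) := ihj (by omega)
            have h2 : k - 1 - (j + 1) = (k - 1 - j) - 1 := by omega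
            rw [h2]
            exact step (k - 1 - j) (by omega) h1
      have hfin := hdesc (k - 1) (le_refl _)
      have h0 : k - 1 - (k - 1) = 0 := by omega
      rwa [h0] at hfin
    -- finish: ξ b e0 = ξ (Bgen b 0) e0 = ξ (Bgen bt 0) e0 = ξ bt e0 = ξ b 0 = 1
    have hB0 : (⟨Bgen b.1 J 0, hPpoly 0⟩ :
        {f : (Fin 2 → Fin k) → Fin t // IsCliquePoly k t f}) = b :=
      Subtype.ext (Bgen_zero (b := b.1) (J := J))
    have hBt0 : (⟨Bgen bt J 0, hPtpoly 0⟩ :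
        {f : (Fin 2 → Fin k) → Fin t // IsCliquePoly k t f}) = ⟨bt, hbtpoly⟩ :=
      Subtype.ext (Bgen_zero (b := bt) (J := J))
    have hc0 := claim0 (Pi.single 0 1)
    rw [hB0, hBt0] at hc0
    rw [hc0]
    -- bt is a padded unary minor of b
    have h2 : ξ 2 ⟨bt, hbtpoly⟩ (Pi.single 0 1)
        = ξ 2 b (fun j => (Pi.single 0 (1:ℤ) : Fin 2 → ℤ) ((fun _ => (1 : Fin 2)) j)) :=
      hminor 2 2 (fun _ => 1) b ⟨bt, hbtpoly⟩ (fun v => rfl) (Pi.single 0 1)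
    have h3 : (fun j : Fin 2 => (Pi.single 0 (1:ℤ) : Fin 2 → ℤ) ((fun _ => (1 : Fin 2)) j))
        = (0 : Fin 2 → ℤ) := by
      funext j
      simp [Pi.single_apply]
    rw [h2, h3, hone]
  -- reduction of the general case to the binary case
  intro n f x
  have hgen1 : ∀ i : Fin n, ξ n f (Pi.single i 1) = 1 := by
    intro i
    set π : Fin n → Fin 2 := fun j => if j = i then 0 else 1 with hπdef
    set bf : (Fin 2 → Fin k) → Fin t := fun v => f.1 (fun j => v (π j)) with hbfdef
    have hbfpoly : IsCliquePoly k t bf := by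
      intro u v h
      exact f.2 _ _ (fun j => h (π j))
    have hm := hminor n 2 π f ⟨bf, hbfpoly⟩ (fun v => rfl) (Pi.single 0 1)
    have hvec : (fun j => (Pi.single 0 (1:ℤ) : Fin 2 → ℤ) (π j)) = Pi.single i (1:ℤ) := by
      funext j
      by_cases hj : j = i
      · simp [hπdef, hj, Pi.single_apply]
      · simp [hπdef, hj, Pi.single_apply]
    rw [hvec] at hm
    rw [← hm]
    exact key ⟨bf, hbfpoly⟩
  -- conclude by decomposing x coordinatewise
  have hsupp : ∀ s : Finset (Fin n), ∀ y : Fin n → ℤ,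
      (∀ j, j ∉ s → y j = 0) → ξ n f y = 1 := by
    intro s
    induction s using Finset.induction_on with
    | empty =>
        intro y hy
        have : y = 0 := funext fun j => hy j (by simp)
        rw [this, hone]
    | @insert a s hnot ih =>
        intro y hy
        have hdecomp : y = (y a • Pi.single a 1) + Function.update y a 0 := by
          funext j
          by_cases hj : j = a
          · subst hj
            simp [Pi.single_apply]
          · simp [Pi.single_apply, hj, Function.update_apply]
        rw [hdecomp, hhom, hz, hgen1, one_zpow, one_mul]
        apply ih
        intro j hj
        by_cases hja : j = a
        · subst hja
          simp
        · rw [Function.update_apply, if_neg hja]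
          exact hy j (by simp [hja, hj])
  exact hsupp Finset.univ x (fun j hj => absurd (Finset.mem_univ j) hj)
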